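/- arXiv:math/0208008 — 6 statements merged into one kernel-verified Lean document; each statement's English description precedes it below -/
import Mathlib

section
/- Let k be a number field containing a CM subfield, and let k_CM denote the maximal CM subfield of k. Then for every rational prime p one has E_p(k) = E_p(k_CM), i.e. every x ∈ k^* with ‖x‖_v = 1 for all places v of k not above p already lies in k_CM. -/
set_option maxHeartbeats 4000000
set_option synthInstance.maxHeartbeats 2000000


open NumberField IsDedekindDomain IntermediateField

noncomputable section

/-- Membership in `E_p(k)`: `x ≠ 0`, `ord_v x = 0` (i.e. `v`-adic valuation `1`) for every
finite place `v` not dividing `p`, and `|σ x| = 1` for every complex embedding `σ`. -/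
def IsEp (k : Type*) [Field k] [NumberField k] (p : ℕ) (x : k) : Prop :=
  x ≠ 0 ∧
  (∀ v : HeightOneSpectrum (𝓞 k), (p : 𝓞 k) ∉ v.asIdeal → v.valuation k x = 1) ∧
  (∀ σ : k →+* ℂ, ‖σ x‖ = 1)

open Classical in
/-- `ord_v(x) ∈ ℤ`, the `v`-adic order of `x ∈ k`. -/
def ordAt {k : Type*} [Field k] [NumberField k] (v : HeightOneSpectrum (𝓞 k)) (x : k) : ℤ :=
  if h : x = 0 then 0
  else - Multiplicative.toAdd (WithZero.unzero (((v.valuation k).ne_zero_iff).mpr h))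

/-- The image of a prime `v` of `k` under a field automorphism `σ` of `k`. -/
def primeMap {k : Type*} [Field k] [NumberField k] (σ : k ≃ₐ[ℚ] k)
    (v : HeightOneSpectrum (𝓞 k)) : HeightOneSpectrum (𝓞 k) where
  asIdeal := Ideal.comap (RingOfIntegers.mapRingEquiv σ.toRingEquiv).symm.toRingHom v.asIdeal
  isPrime := v.isPrime.comap _
  ne_bot := fun h => v.ne_bot (by
    have h2 := Ideal.map_comap_of_surjective
      (RingOfIntegers.mapRingEquiv σ.toRingEquiv).symm.toRingHom
      (RingOfIntegers.mapRingEquiv σ.toRingEquiv).symm.surjective v.asIdeal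
    rw [h, Ideal.map_bot] at h2
    exact h2.symm)

/-- The inertia degree `f(v|p)` of a prime `v` of `k` over the rational prime `p`. -/
def fdeg {k : Type*} [Field k] [NumberField k] (p : ℕ) (v : HeightOneSpectrum (𝓞 k)) : ℕ :=
  Ideal.inertiaDeg' (Ideal.span {(p : ℤ)}) v.asIdeal

/-- A totally real field: every complex embedding has real image. -/
def IsTotallyRealField (F : Type*) [Field F] : Prop :=
  ∀ (σ : F →+* ℂ) (x : F), (σ x).im = 0

/-- A CM field: a totally imaginary quadratic extension of a totally real field. -/
def IsCMField (F : Type*) [Field F] : Prop :=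
  (∀ σ : F →+* ℂ, ∃ x : F, (σ x).im ≠ 0) ∧
  ∃ F₀ : Subfield F, IsTotallyRealField F₀ ∧ Module.finrank F₀ F = 2

def realSubfield : Subfield ℂ where
  carrier := {z | z.im = 0}
  mul_mem' := by intro a b ha hb; simp_all [Complex.mul_im]
  one_mem' := by simp
  add_mem' := by intro a b ha hb; simp_all
  zero_mem' := by simp
  neg_mem' := by intro a ha; simp_all
  inv_mem' := by intro a ha; simp_all [Complex.inv_im]

theorem isAlgebraic_of_numberField {k : Type*} [Field k] [NumberField k]
    (K : Type*) [Field K] [Algebra K k] : Algebra.IsAlgebraic K k := by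
  haveI : CharZero K := (algebraMap K k).charZero
  haveI : IsScalarTower ℚ K k := IsScalarTower.of_algebraMap_eq' (Subsingleton.elim _ _)
  exact ⟨fun y => (Algebra.IsAlgebraic.isAlgebraic (R := ℚ) y).tower_top K⟩

theorem exists_extend_ringHom {K L : Type*} [Field K] [Field L] [Algebra K L]
    [Algebra.IsAlgebraic K L] (ρ : K →+* ℂ) :
    ∃ σ : L →+* ℂ, σ.comp (algebraMap K L) = ρ := by
  letI : Algebra K ℂ := ρ.toAlgebra
  refine ⟨(IsAlgClosed.lift : L →ₐ[K] ℂ).toRingHom, ?_⟩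
  ext a
  simp [RingHom.algebraMap_toAlgebra]

theorem add_inv_im_zero_of_abs_one {z : ℂ} (h : ‖z‖ = 1) :
    (z + z⁻¹).im = 0 := by
  have hnz : Complex.normSq z = 1 := by
    rw [← Complex.sq_norm, h]; norm_num
  rw [Complex.inv_def, hnz]
  simp

/-- If `k` contains a CM subfield and `kCM` is the maximal CM subfield of `k`,
then `E_p(k) = E_p(kCM)`: every `x ∈ k^*` with `‖x‖_v = 1` for all places `v` not above `p`
already lies in `kCM`. -/
theorem statement1 (k : Type*) [Field k] [NumberField k] (p : ℕ) (hp : p.Prime)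
    (kCM : Subfield k) (hkCM : _root_.IsCMField ↥kCM)
    (hmax : ∀ F : Subfield k, _root_.IsCMField ↥F → F ≤ kCM)
    (x : k) (hx : IsEp k p x) : x ∈ kCM := by
  obtain ⟨hx0, -, habs⟩ := hx
  by_cases hreal : ∃ σ : k →+* ℂ, (σ x).im = 0
  · obtain ⟨σ, hσ⟩ := hreal
    have h1 : (σ x) ^ 2 = 1 := by
      have h2 : σ x = ((σ x).re : ℂ) := by
        apply Complex.ext <;> simp [hσ]
      have h3 : |(σ x).re| = 1 := by
        have := habs σ
        rwa [h2, Complex.norm_real, Real.norm_eq_abs] at this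
      have h4 : (σ x).re ^ 2 = 1 := by
        rw [← sq_abs, h3]; norm_num
      rw [h2]
      exact_mod_cast h4
    have h5 : x ^ 2 = 1 := by
      have h6 : σ (x ^ 2 - 1) = 0 := by
        rw [map_sub, map_pow, h1, map_one, sub_self]
      have := (map_eq_zero σ).mp h6
      linear_combination this
    have h6 : (x - 1) * (x + 1) = 0 := by linear_combination h5
    rcases mul_eq_zero.mp h6 with h | h
    · have hx1 : x = 1 := by linear_combination h
      rw [hx1]; exact kCM.one_mem
    · have hx1 : x = -1 := by linear_combination h
      rw [hx1]; exact kCM.neg_mem kCM.one_mem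
  · push_neg at hreal
    set F : Subfield k := Subfield.closure {x} with hF
    have hxF : x ∈ F := Subfield.subset_closure (Set.mem_singleton x)
    have htF : x + x⁻¹ ∈ F := F.add_mem hxF (F.inv_mem hxF)
    set X : ↥F := ⟨x, hxF⟩ with hX
    set T : ↥F := ⟨x + x⁻¹, htF⟩ with hT
    haveI : Algebra.IsAlgebraic ↥F k := isAlgebraic_of_numberField ↥F
    have htimag : ∀ τ : ↥F →+* ℂ, ∃ y : ↥F, (τ y).im ≠ 0 := by
      intro τ
      obtain ⟨σ, hσ⟩ := exists_extend_ringHom (L := k) τ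
      refine ⟨X, ?_⟩
      have hτ : τ X = σ x := by rw [← hσ]; rfl
      rw [hτ]
      exact hreal σ
    set F₀ : Subfield ↥F := Subfield.closure {T} with hF₀
    have hT0 : T ∈ F₀ := Subfield.subset_closure (Set.mem_singleton T)
    have htr : ∀ (ρ : ↥F₀ →+* ℂ) (z : ↥F₀), (ρ z).im = 0 := by
      intro ρ z
      letI : Algebra ↥F₀ k := (F.subtype.comp F₀.subtype).toAlgebra
      haveI : Algebra.IsAlgebraic ↥F₀ k := isAlgebraic_of_numberField ↥F₀
      obtain ⟨σ, hσ⟩ := exists_extend_ringHom (L := k) ρ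
      have hρz : ρ z = σ ((z : ↥F) : k) := by rw [← hσ]; rfl
      rw [hρz]
      have hle : Subfield.closure {T} ≤ Subfield.comap (σ.comp F.subtype) realSubfield := by
        rw [Subfield.closure_le, Set.singleton_subset_iff]
        show ((σ.comp F.subtype) T).im = 0
        show (σ (x + x⁻¹)).im = 0
        rw [map_add, map_inv₀]
        exact add_inv_im_zero_of_abs_one (habs σ)
      exact hle z.2
    -- the quadratic polynomial
    set T' : ↥F₀ := ⟨T, hT0⟩ with hT'
    set q : Polynomial ↥F₀ := Polynomial.X ^ 2 - Polynomial.C T' * Polynomial.X + 1 with hq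
    have hmonic : q.Monic := by
      unfold q
      monicity!
    have haev : Polynomial.aeval X q = 0 := by
      have halg : (algebraMap ↥F₀ ↥F) T' = T := rfl
      have h1 : Polynomial.aeval X q = X ^ 2 - T * X + 1 := by
        rw [hq]
        simp only [map_add, map_sub, map_mul, map_pow, Polynomial.aeval_X,
          Polynomial.aeval_C, map_one, halg]
      rw [h1]
      apply Subtype.ext
      show x ^ 2 - (x + x⁻¹) * x + 1 = 0
      field_simp
      ring
    have hint : IsIntegral ↥F₀ X := ⟨q, hmonic, haev⟩
    have hdvd := minpoly.dvd ↥F₀ X haev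
    have hqdeg : q.natDegree = 2 := by
      unfold q
      compute_degree!
    have hle2 : (minpoly ↥F₀ X).natDegree ≤ 2 := by
      rw [← hqdeg]
      exact Polynomial.natDegree_le_of_dvd hdvd hmonic.ne_zero
    have hpos : 0 < (minpoly ↥F₀ X).natDegree := minpoly.natDegree_pos hint
    have hne1 : (minpoly ↥F₀ X).natDegree ≠ 1 := by
      intro h1
      rw [minpoly.natDegree_eq_one_iff] at h1
      obtain ⟨w, hw⟩ := h1
      haveI : Algebra.IsAlgebraic ℚ k := inferInstance
      obtain ⟨σ₀, -⟩ := exists_extend_ringHom (K := ℚ) (L := k) (algebraMap ℚ ℂ)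
      have h2 := htr ((σ₀.comp F.subtype).comp F₀.subtype) w
      have h3 : ((σ₀.comp F.subtype).comp F₀.subtype) w = σ₀ x := by
        have h4 : ((algebraMap ↥F₀ ↥F w : ↥F) : k) = x := by rw [hw]
        have h5 : (algebraMap ↥F₀ ↥F) w = ((w : ↥F₀) : ↥F) := rfl
        rw [h5] at h4
        simpa using congrArg σ₀ h4
      rw [h3] at h2
      exact hreal σ₀ h2
    have hdeg2 : (minpoly ↥F₀ X).natDegree = 2 := by omega
    have htop : IntermediateField.adjoin ↥F₀ {X} = ⊤ := by
      rw [eq_top_iff]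
      intro y _
      set S : Subfield k := Subfield.map F.subtype (IntermediateField.adjoin ↥F₀ {X}).toSubfield
        with hS
      have hxS : x ∈ S :=
        ⟨X, IntermediateField.mem_adjoin_simple_self _ _, rfl⟩
      have hyS : (y : k) ∈ S :=
        Subfield.closure_le.mpr (Set.singleton_subset_iff.mpr hxS) y.2
      obtain ⟨z, hz, hzy⟩ := hyS
      have hzz : z = y := Subtype.ext hzy
      rw [← hzz]
      exact hz
    clear hq hT' hT hX hF₀ hF hdvd hqdeg hle2 hpos hne1 hmonic haev
    clear_value q T' T X F₀ F
    have hfr : Module.finrank ↥F₀ ↥F = 2 := by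
      have h1 := IntermediateField.adjoin.finrank hint
      have e : ↥(IntermediateField.adjoin ↥F₀ {X}) ≃ₐ[↥F₀] ↥F :=
        (IntermediateField.equivOfEq htop).trans IntermediateField.topEquiv
      exact (e.symm.toLinearEquiv.finrank_eq).trans (h1.trans hdeg2)
    exact hmax F ⟨htimag, F₀, htr, hfr⟩ hxF

end
end

section
/- Let k be a CM field with complex conjugation c, p a rational prime, and let S, M and the x_𝔭 be as in the context. Then the elements ξ_𝔭 = c(x_𝔭)·x_𝔭^{-1} ∈ E_p(k) for 𝔭 ∈ S form a ℚ-basis of E_p(k) ⊗_ℤ ℚ; equivalently, the ξ_𝔭 (𝔭 ∈ S) are multiplicatively independent and the subgroup they generate together with μ(k) has finite index in E_p(k). -/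
open NumberField IsDedekindDomain IntermediateField

noncomputable section

open IsDedekindDomain.HeightOneSpectrum Multiplicative

local notation "ℤₘ₀" => WithZero (Multiplicative ℤ)

namespace S8

variable {k : Type*} [Field k] [NumberField k]

lemma hos_ext {R : Type*} [CommRing R] [IsDedekindDomain R]
    {v w : HeightOneSpectrum R} (h : v.asIdeal = w.asIdeal) : v = w := by
  cases v; cases w; simpa using h

lemma span_ne_zero {v : HeightOneSpectrum (𝓞 k)} {r : 𝓞 k} {e : ℕ}
    (h : Ideal.span {r} = v.asIdeal ^ e) : r ≠ 0 := by
  intro h0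
  have hb : Ideal.span ({r} : Set (𝓞 k)) = ⊥ := by
    rw [h0, Ideal.span_singleton_eq_bot]
  rw [h] at hb
  exact pow_ne_zero e (show v.asIdeal ≠ 0 from v.ne_bot) (show v.asIdeal ^ e = 0 from hb)

lemma intVal_span_pow {v : HeightOneSpectrum (𝓞 k)} {r : 𝓞 k} {e : ℕ}
    (h : Ideal.span {r} = v.asIdeal ^ e) :
    v.intValuation r = ((Multiplicative.ofAdd (-(e : ℤ)) : Multiplicative ℤ) : ℤₘ₀) := by
  have hr : r ≠ 0 := span_ne_zero h
  have h1 : v.intValuation r ≤ Multiplicative.ofAdd (-(e : ℤ)) := by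
    erw [intValuation_le_pow_iff_dvd, h]
  have h2 : ¬ v.intValuation r ≤ Multiplicative.ofAdd (-((e + 1 : ℕ) : ℤ)) := by
    erw [intValuation_le_pow_iff_dvd, h]
    intro hd
    rw [pow_succ] at hd
    have hd' : v.asIdeal ^ e * v.asIdeal ∣ v.asIdeal ^ e * 1 := by simpa using hd
    have hdvd : v.asIdeal ∣ 1 := (mul_dvd_mul_iff_left (a := v.asIdeal ^ e)
        (pow_ne_zero e (by rw [Ideal.zero_eq_bot]; exact v.ne_bot))).mp hd'
    exact v.isPrime.ne_top (Ideal.isUnit_iff.mp (isUnit_of_dvd_one hdvd))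
  obtain ⟨u, hu⟩ := WithZero.ne_zero_iff_exists.mp (v.intValuation_ne_zero r hr)
  rw [← hu] at h1 h2 ⊢
  rw [WithZero.coe_le_coe] at h1
  rw [WithZero.coe_le_coe] at h2
  rw [WithZero.coe_inj]
  have h1' : Multiplicative.toAdd u ≤ -(e : ℤ) := h1
  have h2' : ¬ Multiplicative.toAdd u ≤ -((e : ℤ) + 1) := by
    intro hle
    exact h2 (by push_cast; exact hle)
  have : Multiplicative.toAdd u = -(e : ℤ) := by omega
  rw [← ofAdd_toAdd u, this]

lemma intVal_eq_one_of_ne {v w : HeightOneSpectrum (𝓞 k)} {r : 𝓞 k} {e : ℕ}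
    (h : Ideal.span {r} = v.asIdeal ^ e) (hw : w ≠ v) :
    w.intValuation r = 1 := by
  have hr : r ≠ 0 := span_ne_zero h
  rcases lt_or_eq_of_le (w.intValuation_le_one r) with hlt | heq
  · exfalso
    rw [intValuation_lt_one_iff_dvd, h] at hlt
    have hwv : w.asIdeal ∣ v.asIdeal := w.prime.dvd_of_dvd_pow hlt
    have : v.asIdeal ≤ w.asIdeal := Ideal.le_of_dvd hwv
    exact hw (hos_ext ((v.isMaximal.eq_of_le w.isPrime.ne_top this).symm))
  · rw [intValuation_apply]; exact heq

lemma valcoe (r : 𝓞 k) (v : HeightOneSpectrum (𝓞 k)) :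
    v.valuation k (r : k) = v.intValuation r := by
  rw [show ((r : k)) = algebraMap (𝓞 k) k r from rfl, valuation_of_algebraMap]


section Conj

variable (c : k ≃ₐ[ℚ] k)

/-- The induced ring equiv on integers. -/
abbrev sig (c : k ≃ₐ[ℚ] k) : (𝓞 k) ≃+* (𝓞 k) := RingOfIntegers.mapRingEquiv c.toRingEquiv

lemma coe_sig (r : 𝓞 k) : ((sig c r : 𝓞 k) : k) = c (r : k) := rfl

lemma primeMap_asIdeal (v : HeightOneSpectrum (𝓞 k)) :
    (primeMap c v).asIdeal = Ideal.map (sig c : (𝓞 k) →+* (𝓞 k)) v.asIdeal := by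
  exact Ideal.comap_symm (sig c)

lemma map_le_map_iff (e : (𝓞 k) ≃+* (𝓞 k)) {I J : Ideal (𝓞 k)} :
    Ideal.map (e : (𝓞 k) →+* (𝓞 k)) I ≤ Ideal.map (e : (𝓞 k) →+* (𝓞 k)) J ↔ I ≤ J := by
  constructor
  · intro h x hx
    have h2 : e x ∈ Ideal.map (e : (𝓞 k) →+* (𝓞 k)) J := h (Ideal.mem_map_of_mem _ hx)
    obtain ⟨z, hz, hze⟩ := (Ideal.mem_map_iff_of_surjective _ e.surjective).mp h2
    rwa [show z = x from e.injective hze] at hz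
  · exact Ideal.map_mono

lemma mapIdeal_dvd_iff (e : (𝓞 k) ≃+* (𝓞 k)) {I J : Ideal (𝓞 k)} :
    Ideal.map (e : (𝓞 k) →+* (𝓞 k)) I ∣ Ideal.map (e : (𝓞 k) →+* (𝓞 k)) J ↔ I ∣ J := by
  rw [Ideal.dvd_iff_le, Ideal.dvd_iff_le, map_le_map_iff]

lemma zm0_le_iff {u : Multiplicative ℤ} {n : ℤ} :
    ((u : ℤₘ₀) ≤ ((Multiplicative.ofAdd n : Multiplicative ℤ) : ℤₘ₀)) ↔ Multiplicative.toAdd u ≤ n := by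
  rw [WithZero.coe_le_coe]
  constructor
  · intro h; exact h
  · intro h; exact h

lemma zm0_eq {a b : ℤₘ₀} (ha : a ≠ 0) (hb : b ≠ 0)
    (h : ∀ n : ℕ, a ≤ ((Multiplicative.ofAdd (-(n : ℤ)) : Multiplicative ℤ) : ℤₘ₀) ↔
      b ≤ ((Multiplicative.ofAdd (-(n : ℤ)) : Multiplicative ℤ) : ℤₘ₀))
    (ha1 : a ≤ 1) (hb1 : b ≤ 1) : a = b := by
  obtain ⟨u, hu⟩ := WithZero.ne_zero_iff_exists.mp ha
  obtain ⟨w, hw⟩ := WithZero.ne_zero_iff_exists.mp hb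
  subst hu; subst hw
  rw [← WithZero.coe_one, WithZero.coe_le_coe] at ha1 hb1
  have hu0 : Multiplicative.toAdd u ≤ 0 := ha1
  have hw0 : Multiplicative.toAdd w ≤ 0 := hb1
  have h1 : Multiplicative.toAdd w ≤ Multiplicative.toAdd u := by
    have := (h (-(Multiplicative.toAdd u)).toNat).mp (zm0_le_iff.mpr (by omega))
    have := zm0_le_iff.mp this
    omega
  have h2 : Multiplicative.toAdd u ≤ Multiplicative.toAdd w := by
    have := (h (-(Multiplicative.toAdd w)).toNat).mpr (zm0_le_iff.mpr (by omega))
    have := zm0_le_iff.mp this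
    omega
  rw [WithZero.coe_inj, ← ofAdd_toAdd u, ← ofAdd_toAdd w, le_antisymm h2 h1]

lemma intVal_primeMap (v : HeightOneSpectrum (𝓞 k)) (r : 𝓞 k) :
    (primeMap c v).intValuation (sig c r) = v.intValuation r := by
  by_cases hr : r = 0
  · subst hr; simp
  have hsr : sig c r ≠ 0 := fun h => hr (by simpa using congrArg (sig c).symm h)
  apply zm0_eq ((primeMap c v).intValuation_ne_zero _ hsr) (v.intValuation_ne_zero _ hr)
  · intro n
    erw [intValuation_le_pow_iff_dvd, intValuation_le_pow_iff_dvd, primeMap_asIdeal]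
    rw [← Ideal.map_pow]
    have hspan : Ideal.span ({sig c r} : Set (𝓞 k)) =
        Ideal.map (sig c : (𝓞 k) →+* (𝓞 k)) (Ideal.span {r}) := by
      rw [Ideal.map_span, Set.image_singleton]
      rfl
    rw [hspan, mapIdeal_dvd_iff]
  · exact (primeMap c v).intValuation_le_one _
  · exact v.intValuation_le_one _

lemma val_primeMap (v : HeightOneSpectrum (𝓞 k)) (y : k) :
    (primeMap c v).valuation k (c y) = v.valuation k y := by
  obtain ⟨a, b, hb, rfl⟩ := IsFractionRing.div_surjective (A := 𝓞 k) y
  have hb0 : (b : 𝓞 k) ≠ 0 := nonZeroDivisors.ne_zero hb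
  have hab : ∀ (t : 𝓞 k), c (algebraMap (𝓞 k) k t) = algebraMap (𝓞 k) k (sig c t) := fun t => rfl
  rw [map_div₀, hab, hab, map_div₀, map_div₀, valuation_of_algebraMap, valuation_of_algebraMap,
    valuation_of_algebraMap, valuation_of_algebraMap, intVal_primeMap, intVal_primeMap]

end Conj

section Conj2

variable (c : k ≃ₐ[ℚ] k)

lemma sig_symm_coe (s : 𝓞 k) : (((sig c).symm s : 𝓞 k) : k) = c.symm (s : k) := rfl

lemma mem_primeMap {v : HeightOneSpectrum (𝓞 k)} {r : 𝓞 k} :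
    r ∈ (primeMap c v).asIdeal ↔ (sig c).symm r ∈ v.asIdeal := Iff.rfl

lemma primeMap_primeMap (hcc : ∀ y : k, c (c y) = y) (v : HeightOneSpectrum (𝓞 k)) :
    primeMap c (primeMap c v) = v := by
  have hsymm : ∀ y : k, c.symm y = c y := by
    intro y
    conv_lhs => rw [← hcc y]
    exact c.symm_apply_apply (c y)
  apply hos_ext
  ext r
  rw [mem_primeMap, mem_primeMap]
  have : (sig c).symm ((sig c).symm r) = r := by
    have h1 : (((sig c).symm ((sig c).symm r) : 𝓞 k) : k) = c.symm (c.symm (r : k)) := rfl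
    have h2 : c.symm (c.symm (r : k)) = (r : k) := by rw [hsymm, hsymm, hcc]
    exact RingOfIntegers.ext (h1.trans h2)
  rw [this]

lemma primeMap_p {v : HeightOneSpectrum (𝓞 k)} {p : ℕ} :
    (p : 𝓞 k) ∈ (primeMap c v).asIdeal ↔ (p : 𝓞 k) ∈ v.asIdeal := by
  rw [mem_primeMap, map_natCast]

lemma span_sig (r : 𝓞 k) :
    Ideal.span ({sig c r} : Set (𝓞 k)) = Ideal.map (sig c : (𝓞 k) →+* (𝓞 k)) (Ideal.span {r}) := by
  rw [Ideal.map_span, Set.image_singleton]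
  rfl

lemma span_sig_pow {v : HeightOneSpectrum (𝓞 k)} {r : 𝓞 k} {e : ℕ}
    (h : Ideal.span {r} = v.asIdeal ^ e) :
    Ideal.span ({sig c r} : Set (𝓞 k)) = (primeMap c v).asIdeal ^ e := by
  rw [span_sig, h, Ideal.map_pow, primeMap_asIdeal]

end Conj2

lemma val_ofAdd_neg_ordAt {y : k} (hy : y ≠ 0) (v : HeightOneSpectrum (𝓞 k)) :
    v.valuation k y = ((Multiplicative.ofAdd (-(ordAt v y)) : Multiplicative ℤ) : ℤₘ₀) := by
  rw [ordAt, dif_neg hy, neg_neg, ofAdd_toAdd, WithZero.coe_unzero]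

lemma exists_int_of_val_eq_one {y : k} (hy : y ≠ 0) (h : ∀ v : HeightOneSpectrum (𝓞 k), v.valuation k y = 1) :
    ∃ t : 𝓞 k, (t : k) = y := by
  obtain ⟨a, b, hb, rfl⟩ := IsFractionRing.div_surjective (A := 𝓞 k) y
  have hb0 : b ≠ 0 := nonZeroDivisors.ne_zero hb
  have hbk : algebraMap (𝓞 k) k b ≠ 0 := by
    simpa using (map_ne_zero_iff _ (IsFractionRing.injective (𝓞 k) k)).mpr hb0
  have ha0 : a ≠ 0 := by
    intro h0
    apply hy
    rw [h0, map_zero, zero_div]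
  have hval : ∀ v : HeightOneSpectrum (𝓞 k), v.intValuation a = v.intValuation b := by
    intro v
    have h1 : v.valuation k (algebraMap (𝓞 k) k a) =
        v.valuation k (algebraMap (𝓞 k) k a / algebraMap (𝓞 k) k b) * v.valuation k (algebraMap (𝓞 k) k b) := by
      rw [← Valuation.map_mul, div_mul_cancel₀ _ hbk]
    rw [h v, one_mul, valuation_of_algebraMap, valuation_of_algebraMap] at h1
    exact h1
  classical
  have hcount : Associates.mk (Ideal.span ({a} : Set (𝓞 k))) = Associates.mk (Ideal.span ({b} : Set (𝓞 k))) := by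
    apply Associates.eq_of_eq_counts
    · exact Associates.mk_ne_zero.mpr (by simpa [Ideal.zero_eq_bot, Ideal.span_singleton_eq_bot] using ha0)
    · exact Associates.mk_ne_zero.mpr (by simpa [Ideal.zero_eq_bot, Ideal.span_singleton_eq_bot] using hb0)
    · intro P hP
      obtain ⟨I, rfl⟩ := Associates.mk_surjective P
      have hIirr : Irreducible I := Associates.irreducible_mk.mp hP
      have hIprime : Prime I := UniqueFactorizationMonoid.irreducible_iff_prime.mp hIirr
      set v : HeightOneSpectrum (𝓞 k) :=
        ⟨I, Ideal.isPrime_of_prime hIprime, by simpa [Ideal.zero_eq_bot] using hIprime.ne_zero⟩ with hv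
      have := hval v
      rw [intValuation_apply, intValuation_apply, v.intValuationDef_if_neg ha0,
        v.intValuationDef_if_neg hb0, WithZero.exp, WithZero.exp, WithZero.coe_inj] at this
      have h2 := congrArg Multiplicative.toAdd this
      simp only [toAdd_ofAdd, neg_inj, Int.natCast_inj] at h2
      exact h2
  have hspan : Ideal.span ({a} : Set (𝓞 k)) = Ideal.span ({b} : Set (𝓞 k)) :=
    associated_iff_eq.mp (Associates.mk_eq_mk_iff_associated.mp hcount)
  have hmem : a ∈ Ideal.span ({b} : Set (𝓞 k)) := by
    rw [← hspan]; exact Ideal.mem_span_singleton_self a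
  obtain ⟨t, ht⟩ := Ideal.mem_span_singleton.mp hmem
  refine ⟨t, ?_⟩
  rw [RingOfIntegers.coe_eq_algebraMap, ht, map_mul]
  field_simp


lemma zm0_pow_zpow {g h : Multiplicative ℤ} {M : ℕ} {b : ℤ}
    (H : (M : ℤ) * Multiplicative.toAdd g + b * Multiplicative.toAdd h = 0) :
    ((g : ℤₘ₀)) ^ M * ((h : ℤₘ₀)) ^ b = 1 := by
  have h1 : (g ^ M * h ^ b) = (1 : Multiplicative ℤ) := by
    apply Multiplicative.toAdd.injective
    simp only [toAdd_mul, toAdd_pow, toAdd_zpow, toAdd_one, nsmul_eq_mul, smul_eq_mul]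
    exact H
  calc ((g : ℤₘ₀)) ^ M * ((h : ℤₘ₀)) ^ b = ((g ^ M * h ^ b : Multiplicative ℤ) : ℤₘ₀) := by
        rw [WithZero.coe_mul, WithZero.coe_pow, WithZero.coe_zpow]
    _ = 1 := by rw [h1, WithZero.coe_one]

lemma zm0_sq_one {a : ℤₘ₀} (ha : a ≠ 0) (h : a * a = 1) : a = 1 := by
  obtain ⟨u, hu⟩ := WithZero.ne_zero_iff_exists.mp ha
  rw [← hu] at h ⊢
  rw [← WithZero.coe_mul, ← WithZero.coe_one, WithZero.coe_inj] at h
  rw [← WithZero.coe_one, WithZero.coe_inj]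
  have := congrArg Multiplicative.toAdd h
  simp only [toAdd_mul, toAdd_one] at this
  apply Multiplicative.toAdd.injective
  simp only [toAdd_one]
  omega

end S8

open S8

/-- The elements `ξ_𝔭 = c(x_𝔭)·x_𝔭⁻¹` for `𝔭 ∈ S` form a `ℚ`-basis of
`E_p(k) ⊗ ℚ`: they lie in `E_p(k)`, are multiplicatively independent, and together with the
roots of unity `μ(k)` generate a finite-index subgroup of `E_p(k)`. -/
theorem statement8 (k : Type*) [Field k] [NumberField k] (hk : _root_.IsCMField k)
    (c : k ≃ₐ[ℚ] k) (hc : ∀ (φ : k →+* ℂ) (y : k), φ (c y) = (starRingEnd ℂ) (φ y))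
    (p : ℕ) (hp : p.Prime)
    (T : Finset (HeightOneSpectrum (𝓞 k)))
    (hT : ∀ v, v ∈ T ↔ ((p : 𝓞 k) ∈ v.asIdeal ∧ primeMap c v ≠ v))
    (M : ℕ) (hM : 0 < M) (hMf : ∀ v ∈ T, fdeg p v ∣ M)
    (x : HeightOneSpectrum (𝓞 k) → 𝓞 k)
    (hxgen : ∀ v ∈ T, Ideal.span {x v} = v.asIdeal ^ (M / fdeg p v))
    (hxc : ∀ v ∈ T, c ((x v : k)) = ((x (primeMap c v) : k)))
    (S : Finset (HeightOneSpectrum (𝓞 k))) (hST : ∀ v ∈ S, v ∈ T)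
    (hSrep : ∀ v ∈ T, (v ∈ S ↔ primeMap c v ∉ S)) :
    (∀ v ∈ S, IsEp k p (c ((x v : k)) * (x v : k)⁻¹)) ∧
    (∀ a : HeightOneSpectrum (𝓞 k) → ℤ,
        (∏ v ∈ S, (c ((x v : k)) * (x v : k)⁻¹) ^ a v) = 1 → ∀ v ∈ S, a v = 0) ∧
    (∀ y : k, IsEp k p y → ∃ n : ℕ, 0 < n ∧
        ∃ (a : HeightOneSpectrum (𝓞 k) → ℤ) (ζ : k), (∃ l : ℕ, 0 < l ∧ ζ ^ l = 1) ∧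
          y ^ n = ζ * ∏ v ∈ S, (c ((x v : k)) * (x v : k)⁻¹) ^ a v) := by
  classical
  obtain ⟨φ₀⟩ := (inferInstance : Nonempty (k →+* ℂ))
  have hcc : ∀ y : k, c (c y) = y := by
    intro y
    apply φ₀.injective
    rw [hc, hc]
    simp
  -- basic facts
  have hfpos : ∀ v ∈ T, 0 < fdeg p v := fun v hv =>
    Nat.pos_of_ne_zero (fun h0 => hM.ne' (by simpa [h0, zero_dvd_iff] using hMf v hv))
  have hepos : ∀ v ∈ T, 0 < M / fdeg p v := fun v hv =>
    Nat.div_pos (Nat.le_of_dvd hM (hMf v hv)) (hfpos v hv)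
  have hfe : ∀ v ∈ T, fdeg p v * (M / fdeg p v) = M := fun v hv => Nat.mul_div_cancel' (hMf v hv)
  have hTmap : ∀ v ∈ T, primeMap c v ∈ T := by
    intro v hv
    rw [hT]
    refine ⟨(primeMap_p c).mpr ((hT v).mp hv).1, ?_⟩
    rw [primeMap_primeMap c hcc v]
    exact fun h => ((hT v).mp hv).2 h.symm
  have hx0 : ∀ v ∈ T, x v ≠ 0 := fun v hv => span_ne_zero (hxgen v hv)
  have hxk0 : ∀ v ∈ T, (x v : k) ≠ 0 := by
    intro v hv h0
    exact hx0 v hv (RingOfIntegers.ext h0)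
  have hsx : ∀ v ∈ T, sig c (x v) = x (primeMap c v) := fun v hv =>
    RingOfIntegers.ext (hxc v hv)
  have espan' : ∀ v ∈ T,
      Ideal.span {x (primeMap c v)} = (primeMap c v).asIdeal ^ (M / fdeg p v) := by
    intro v hv
    rw [← hsx v hv]
    exact span_sig_pow c (hxgen v hv)
  have A1 : ∀ v ∈ T, v.valuation k ((x v : k)) =
      ((Multiplicative.ofAdd (-((M / fdeg p v : ℕ) : ℤ)) : Multiplicative ℤ) : ℤₘ₀) := by
    intro v hv
    rw [valcoe, intVal_span_pow (hxgen v hv)]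
  have A1' : ∀ v ∈ T, (primeMap c v).valuation k ((x (primeMap c v) : k)) =
      ((Multiplicative.ofAdd (-((M / fdeg p v : ℕ) : ℤ)) : Multiplicative ℤ) : ℤₘ₀) := by
    intro v hv
    rw [valcoe, intVal_span_pow (espan' v hv)]
  have A2 : ∀ v ∈ T, ∀ w : HeightOneSpectrum (𝓞 k), w ≠ v → w.valuation k ((x v : k)) = 1 := by
    intro v hv w hw
    rw [valcoe, intVal_eq_one_of_ne (hxgen v hv) hw]
  have A2' : ∀ v ∈ T, ∀ w : HeightOneSpectrum (𝓞 k), w ≠ primeMap c v →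
      w.valuation k ((x (primeMap c v) : k)) = 1 := by
    intro v hv w hw
    rw [valcoe, intVal_eq_one_of_ne (espan' v hv) hw]
  -- valuations of the ξ's
  have X1 : ∀ v ∈ S, ∀ w : HeightOneSpectrum (𝓞 k), w ≠ v → w ≠ primeMap c v →
      w.valuation k (c ((x v : k)) * (x v : k)⁻¹) = 1 := by
    intro v hv w hw1 hw2
    rw [Valuation.map_mul, map_inv₀, hxc v (hST v hv), A2' v (hST v hv) w hw2,
      A2 v (hST v hv) w hw1, inv_one, mul_one]
  have X2 : ∀ v ∈ S, v.valuation k (c ((x v : k)) * (x v : k)⁻¹) =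
      ((Multiplicative.ofAdd ((M / fdeg p v : ℕ) : ℤ) : Multiplicative ℤ) : ℤₘ₀) := by
    intro v hv
    have hvT := hST v hv
    have hne : v ≠ primeMap c v := fun h => ((hT v).mp hvT).2 h.symm
    rw [Valuation.map_mul, map_inv₀, hxc v hvT, A2' v hvT v hne, A1 v hvT, one_mul,
      ← WithZero.coe_inv, WithZero.coe_inj]
    simp
  have X3 : ∀ v ∈ S, (primeMap c v).valuation k (c ((x v : k)) * (x v : k)⁻¹) =
      ((Multiplicative.ofAdd (-((M / fdeg p v : ℕ) : ℤ)) : Multiplicative ℤ) : ℤₘ₀) := by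
    intro v hv
    have hvT := hST v hv
    have hne : primeMap c v ≠ v := ((hT v).mp hvT).2
    rw [Valuation.map_mul, map_inv₀, hxc v hvT, A1' v hvT, A2 v hvT _ hne, inv_one, mul_one]
  have Xne : ∀ v ∈ S, c ((x v : k)) * (x v : k)⁻¹ ≠ 0 := by
    intro v hv
    have h1 : c ((x v : k)) ≠ 0 := by
      rw [map_ne_zero]; exact hxk0 v (hST v hv)
    exact mul_ne_zero h1 (inv_ne_zero (hxk0 v (hST v hv)))
  have hpmS : ∀ v ∈ S, primeMap c v ∉ S := fun v hv => (hSrep v (hST v hv)).mp hv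
  -- Part 1
  have part1 : ∀ v ∈ S, IsEp k p (c ((x v : k)) * (x v : k)⁻¹) := by
    intro v hv
    have hvT := hST v hv
    refine ⟨Xne v hv, ?_, ?_⟩
    · intro w hpw
      have hw1 : w ≠ v := fun h => hpw (h ▸ ((hT v).mp hvT).1)
      have hw2 : w ≠ primeMap c v := fun h =>
        hpw (h ▸ ((hT (primeMap c v)).mp (hTmap v hvT)).1)
      exact X1 v hv w hw1 hw2
    · intro σ
      have hσx : σ ((x v : k)) ≠ 0 := by
        rw [map_ne_zero]; exact hxk0 v hvT
      rw [map_mul, map_inv₀, hc, norm_mul, norm_inv, Complex.norm_conj]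
      exact mul_inv_cancel₀ (norm_ne_zero_iff.mpr hσx)
  refine ⟨part1, ?_, ?_⟩
  -- Part 2
  · intro a h w hw
    have hwT := hST w hw
    have hval := congrArg (w.valuation k) h
    rw [map_one, map_prod] at hval
    rw [Finset.prod_eq_single_of_mem w hw (fun u hu hne => by
      rw [map_zpow₀, X1 u hu w (fun h2 => hne h2.symm)
        (fun h2 => hpmS u hu (h2 ▸ hw)), one_zpow])] at hval
    rw [map_zpow₀, X2 w hw, ← WithZero.coe_zpow, ← WithZero.coe_one, WithZero.coe_inj] at hval
    have h2 := congrArg Multiplicative.toAdd hval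
    simp only [toAdd_zpow, toAdd_ofAdd, toAdd_one, smul_eq_mul] at h2
    have he := hepos w hwT
    rcases mul_eq_zero.mp h2 with h0 | h0
    · exact h0
    · exfalso; omega
  -- Part 3
  · intro y hy
    obtain ⟨hy0, hyfin, hyabs⟩ := hy
    have hyc : y * c y = 1 := by
      apply φ₀.injective
      rw [map_one, map_mul, hc, Complex.mul_conj, Complex.normSq_eq_norm_sq, hyabs φ₀]
      norm_num
    have hvmul : ∀ w : HeightOneSpectrum (𝓞 k), w.valuation k y * w.valuation k (c y) = 1 := by
      intro w
      rw [← Valuation.map_mul, hyc, map_one]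
    have hyT : ∀ w : HeightOneSpectrum (𝓞 k), (p : 𝓞 k) ∈ w.asIdeal → w ∉ T →
        w.valuation k y = 1 := by
      intro w hpw hwT
      have hwfix : primeMap c w = w := by
        by_contra hne
        exact hwT ((hT w).mpr ⟨hpw, hne⟩)
      have h2 : w.valuation k (c y) = w.valuation k y := by
        conv_lhs => rw [← hwfix]
        rw [val_primeMap]
      have h1 := hvmul w
      rw [h2] at h1
      exact zm0_sq_one ((Valuation.ne_zero_iff _).mpr hy0) h1
    have hyval : ∀ w : HeightOneSpectrum (𝓞 k), w.valuation k y =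
        ((Multiplicative.ofAdd (-(ordAt w y)) : Multiplicative ℤ) : ℤₘ₀) :=
      fun w => val_ofAdd_neg_ordAt hy0 w
    have hconj : ∀ u : HeightOneSpectrum (𝓞 k), (primeMap c u).valuation k y =
        ((Multiplicative.ofAdd (ordAt u y) : Multiplicative ℤ) : ℤₘ₀) := by
      intro u
      have h1 := hvmul (primeMap c u)
      rw [val_primeMap, hyval u] at h1
      rw [eq_inv_of_mul_eq_one_left h1]
      rw [← WithZero.coe_inv, WithZero.coe_inj]
      simp
    -- the candidate root of unity
    set ε := y ^ M * ∏ v ∈ S, (c ((x v : k)) * (x v : k)⁻¹) ^ (ordAt v y * (fdeg p v : ℤ))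
      with hεdef
    have hε0 : ε ≠ 0 := by
      apply mul_ne_zero (pow_ne_zero M hy0)
      rw [Finset.prod_ne_zero_iff]
      exact fun u hu => zpow_ne_zero _ (Xne u hu)
    have hεval : ∀ w : HeightOneSpectrum (𝓞 k), w.valuation k ε = 1 := by
      intro w
      rw [hεdef, Valuation.map_mul, map_pow, map_prod]
      by_cases hpw : (p : 𝓞 k) ∈ w.asIdeal
      · by_cases hwT : w ∈ T
        · by_cases hwS : w ∈ S
          · rw [Finset.prod_eq_single_of_mem w hwS (fun u hu hne => by
              rw [map_zpow₀, X1 u hu w (fun h2 => hne h2.symm)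
                (fun h2 => hpmS u hu (h2 ▸ hwS)), one_zpow])]
            rw [map_zpow₀, X2 w hwS, hyval w]
            apply zm0_pow_zpow
            simp only [toAdd_ofAdd]
            have hM' : (M : ℤ) = (fdeg p w : ℤ) * ((M / fdeg p w : ℕ) : ℤ) := by
              exact_mod_cast (hfe w hwT).symm
            rw [hM']; ring
          · -- w = primeMap c v for v := primeMap c w ∈ S
            set v := primeMap c w with hvdef
            have hvS : v ∈ S := by
              by_contra hvS
              exact hwS ((hSrep w hwT).mpr (hvdef ▸ hvS))
            have hwv : w = primeMap c v := by
              rw [hvdef, primeMap_primeMap c hcc w]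
            have hvT := hST v hvS
            rw [Finset.prod_eq_single_of_mem v hvS (fun u hu hne => by
              have hne1 : w ≠ u := fun h2 => hwS (h2 ▸ hu)
              have hne2 : w ≠ primeMap c u := by
                intro h2
                apply hne
                rw [hwv] at h2
                have := congrArg (primeMap c) h2
                rw [primeMap_primeMap c hcc, primeMap_primeMap c hcc] at this
                exact this.symm ▸ rfl
              rw [map_zpow₀, X1 u hu w hne1 hne2, one_zpow])]
            rw [map_zpow₀, hwv, X3 v hvS, hconj v]
            apply zm0_pow_zpow
            simp only [toAdd_ofAdd]
            have hM' : (M : ℤ) = (fdeg p v : ℤ) * ((M / fdeg p v : ℕ) : ℤ) := by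
              exact_mod_cast (hfe v hvT).symm
            rw [hM']; ring
        · -- above p but not in T
          rw [hyT w hpw hwT, one_pow, one_mul]
          apply Finset.prod_eq_one
          intro u hu
          have hu1 : w ≠ u := fun h2 => hwT (h2 ▸ hST u hu)
          have hu2 : w ≠ primeMap c u := fun h2 => hwT (h2 ▸ hTmap u (hST u hu))
          rw [map_zpow₀, X1 u hu w hu1 hu2, one_zpow]
      · -- not above p
        rw [hyfin w hpw, one_pow, one_mul]
        apply Finset.prod_eq_one
        intro u hu
        rw [map_zpow₀, (part1 u hu).2.1 w hpw, one_zpow]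
    obtain ⟨t, ht⟩ := exists_int_of_val_eq_one hε0 hεval
    have hint : IsIntegral ℤ ε := ht ▸ RingOfIntegers.isIntegral_coe t
    have habs : ∀ φ : k →+* ℂ, ‖φ ε‖ = 1 := by
      intro φ
      rw [hεdef, map_mul, map_pow, map_prod, norm_mul,
        norm_pow, norm_prod, hyabs φ, one_pow, one_mul]
      apply Finset.prod_eq_one
      intro u hu
      rw [map_zpow₀, norm_zpow, (part1 u hu).2.2 φ, one_zpow]
    obtain ⟨l, hl, hεl⟩ := NumberField.Embeddings.pow_eq_one_of_norm_eq_one k ℂ hint habs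
    refine ⟨M, hM, fun v => -(ordAt v y * (fdeg p v : ℤ)), ε, ⟨l, hl, hεl⟩, ?_⟩
    rw [hεdef, mul_assoc, ← Finset.prod_mul_distrib]
    rw [Finset.prod_eq_one (fun u hu => by
      rw [← zpow_add₀ (Xne u hu)]
      simp), mul_one]

end
end

section
/- Let k ⊂ ℂ be a CM field with complex conjugation c, p a rational prime, and let S, M and the x_𝔭 be as in the context; set ξ_𝔭 = c(x_𝔭)·x_𝔭^{-1} (so |ξ_𝔭| = 1 under the fixed embedding). For each 𝔭 ∈ S let θ_𝔭 ∈ ℝ be an argument of ξ_𝔭, i.e. ξ_𝔭 = e^{iθ_𝔭}. Then for any integers (a_𝔭)_{𝔭∈S}, not all zero, the real number ∑_{𝔭∈S} a_𝔭·θ_𝔭 does not lie in 2π·ℚ. In particular the classes of the θ_𝔭 in ℝ/2πℚ are ℚ-linearly independent. -/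
open NumberField IsDedekindDomain IntermediateField

noncomputable section

set_option maxHeartbeats 1000000 in
set_option synthInstance.maxHeartbeats 1000000 in
/-- If `(r) = w^e` with `w ≠ v₀`, then the `v₀`-adic valuation of `r` is `1`. -/
private lemma aux_val_eq_one {k : Subfield ℂ} [NumberField ↥k]
    (v₀ w : HeightOneSpectrum (𝓞 ↥k)) (hne : w ≠ v₀) (r : 𝓞 ↥k) (e : ℕ)
    (hgen : Ideal.span {r} = w.asIdeal ^ e) :
    v₀.intValuationDef r = 1 := by
  refine le_antisymm (v₀.intValuation_le_one r) ?_
  by_contra hlt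
  push_neg at hlt
  have hdvd : v₀.asIdeal ∣ Ideal.span {r} := (v₀.intValuation_lt_one_iff_dvd r).mp hlt
  rw [hgen] at hdvd
  have h2 : v₀.asIdeal ∣ w.asIdeal := v₀.prime.dvd_of_dvd_pow hdvd
  have hle : w.asIdeal ≤ v₀.asIdeal := Ideal.le_of_dvd h2
  exact hne (HeightOneSpectrum.ext (w.isMaximal.eq_of_le v₀.isPrime.ne_top hle))

set_option maxHeartbeats 2000000 in
set_option synthInstance.maxHeartbeats 1000000 in
/-- With `ξ_𝔭 = c(x_𝔭)·x_𝔭⁻¹` and `θ_𝔭` an argument of `ξ_𝔭`, for any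
integers `a_𝔭` (𝔭 ∈ S), not all zero, the number `∑_{𝔭∈S} a_𝔭·θ_𝔭` does not lie in `2π·ℚ`;
in particular the classes of the `θ_𝔭` in `ℝ/2πℚ` are `ℚ`-linearly independent. -/
theorem statement10 (k : Subfield ℂ) [NumberField ↥k] (hk : _root_.IsCMField ↥k)
    (c : ↥k ≃ₐ[ℚ] ↥k) (hc : ∀ (φ : ↥k →+* ℂ) (y : ↥k), φ (c y) = (starRingEnd ℂ) (φ y))
    (p : ℕ) (hp : p.Prime)
    (T : Finset (HeightOneSpectrum (𝓞 ↥k)))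
    (hT : ∀ v, v ∈ T ↔ ((p : 𝓞 ↥k) ∈ v.asIdeal ∧ primeMap c v ≠ v))
    (M : ℕ) (hM : 0 < M) (hMf : ∀ v ∈ T, fdeg p v ∣ M)
    (x : HeightOneSpectrum (𝓞 ↥k) → 𝓞 ↥k)
    (hxgen : ∀ v ∈ T, Ideal.span {x v} = v.asIdeal ^ (M / fdeg p v))
    (hxc : ∀ v ∈ T, c ((x v : ↥k)) = ((x (primeMap c v) : ↥k)))
    (S : Finset (HeightOneSpectrum (𝓞 ↥k))) (hST : ∀ v ∈ S, v ∈ T)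
    (hSrep : ∀ v ∈ T, (v ∈ S ↔ primeMap c v ∉ S))
    (θ : HeightOneSpectrum (𝓞 ↥k) → ℝ)
    (hθ : ∀ v ∈ S, ((c ((x v : ↥k)) * ((x v : ↥k))⁻¹ : ↥k) : ℂ) = Complex.exp (θ v * Complex.I))
    (a : HeightOneSpectrum (𝓞 ↥k) → ℤ) (ha : ∃ v ∈ S, a v ≠ 0) :
    ¬ ∃ ρ : ℚ, (∑ v ∈ S, (a v : ℝ) * θ v) = 2 * Real.pi * ρ := by
  rintro ⟨ρ, hρ⟩
  obtain ⟨v₀, hv₀S, ha₀⟩ := ha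
  have hv₀T := hST v₀ hv₀S
  classical
  have hφinj : Function.Injective (k.subtype) := k.subtype.injective
  -- complex conjugation is an involution
  have hc2 : ∀ y : ↥k, c (c y) = y := fun y => hφinj (by
    rw [hc k.subtype (c y), hc k.subtype y, Complex.conj_conj])
  have hcsymm : ∀ y : ↥k, c.symm y = c y := fun y => by
    conv_lhs => rw [← hc2 y]
    exact c.symm_apply_apply (c y)
  -- primeMap c is an involution
  have hpm2 : ∀ v : HeightOneSpectrum (𝓞 ↥k), primeMap c (primeMap c v) = v := by
    intro v
    apply HeightOneSpectrum.ext
    show Ideal.comap _ (Ideal.comap _ v.asIdeal) = v.asIdeal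
    rw [Ideal.comap_comap]
    have hcomp : ((RingOfIntegers.mapRingEquiv c.toRingEquiv).symm.toRingHom).comp
        ((RingOfIntegers.mapRingEquiv c.toRingEquiv).symm.toRingHom)
        = RingHom.id (𝓞 ↥k) := by
      refine RingHom.ext fun y => ?_
      apply NumberField.RingOfIntegers.ext
      show c.symm (c.symm (y : ↥k)) = ((y : 𝓞 ↥k) : ↥k)
      rw [hcsymm, hcsymm, hc2]
    rw [hcomp, Ideal.comap_id]
  -- T is stable under primeMap c
  have hTmem : ∀ v ∈ T, primeMap c v ∈ T := by
    intro v hv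
    obtain ⟨h1, h2⟩ := (hT v).mp hv
    refine (hT _).mpr ⟨?_, ?_⟩
    · show (RingOfIntegers.mapRingEquiv c.toRingEquiv).symm.toRingHom (p : 𝓞 ↥k) ∈ v.asIdeal
      rw [map_natCast]
      exact h1
    · intro heq
      rw [hpm2 v] at heq
      exact h2 heq.symm
  -- positivity of the exponents
  have hepos : ∀ v ∈ T, 0 < M / fdeg p v := by
    intro v hv
    have hf := hMf v hv
    have hf0 : 0 < fdeg p v := by
      rcases Nat.eq_zero_or_pos (fdeg p v) with h | h
      · rw [h] at hf
        exact absurd (zero_dvd_iff.mp hf) hM.ne'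
      · exact h
    exact Nat.div_pos (Nat.le_of_dvd hM hf) hf0
  -- the x v are nonzero
  have hxne : ∀ v ∈ T, x v ≠ 0 := by
    intro v hv hx0
    have h := hxgen v hv
    rw [hx0, Ideal.span_singleton_eq_bot.mpr rfl] at h
    exact pow_ne_zero _ v.ne_bot (by rw [Ideal.zero_eq_bot]; exact h.symm)
  -- the element ξ
  set ξ : ↥k := ∏ v ∈ S, (c ((x v : ↥k)) * ((x v : ↥k))⁻¹) ^ (a v) with hξdef
  -- complex side: ξ ^ ρ.den = 1
  have h1 : k.subtype ξ = Complex.exp ((∑ v ∈ S, (a v : ℝ) * θ v : ℝ) * Complex.I) := by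
    rw [hξdef, map_prod]
    have step : ∀ v ∈ S, k.subtype ((c ((x v : ↥k)) * ((x v : ↥k))⁻¹) ^ (a v))
        = Complex.exp ((a v : ℂ) * (θ v * Complex.I)) := by
      intro v hv
      rw [map_zpow₀]
      have h : k.subtype (c ((x v : ↥k)) * ((x v : ↥k))⁻¹)
          = Complex.exp (θ v * Complex.I) := hθ v hv
      rw [h]
      exact (Complex.exp_int_mul _ _).symm
    rw [Finset.prod_congr rfl step, ← Complex.exp_sum]
    congr 1
    push_cast
    rw [Finset.sum_mul]
    exact Finset.sum_congr rfl fun v _ => by ring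
  have hden0 : (ρ.den : ℂ) ≠ 0 := Nat.cast_ne_zero.mpr ρ.den_nz
  have hξpow : ξ ^ (ρ.den : ℕ) = 1 := by
    apply hφinj
    rw [map_pow, map_one, h1, hρ, ← Complex.exp_nat_mul]
    rw [show ((ρ.den : ℂ)) * (((2 * Real.pi * (ρ : ℝ) : ℝ) : ℂ) * Complex.I)
        = (ρ.num : ℂ) * (2 * (Real.pi : ℂ) * Complex.I) from by
      push_cast [Rat.cast_def]
      field_simp]
    exact Complex.exp_int_mul_two_pi_mul_I ρ.num
  -- valuation side
  set u : WithZero (Multiplicative ℤ) := v₀.intValuationDef (x v₀) with hu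
  have hu0 : u ≠ 0 := v₀.intValuation_ne_zero _ (hxne v₀ hv₀T)
  have hu1 : u < 1 := by
    rw [hu, ← HeightOneSpectrum.intValuation_apply, v₀.intValuation_lt_one_iff_dvd, hxgen v₀ hv₀T]
    exact dvd_pow_self _ (hepos v₀ hv₀T).ne'
  -- valuation of integral elements
  have hvalcoe : ∀ r : 𝓞 ↥k, v₀.valuation ↥k ((r : ↥k)) = v₀.intValuationDef r := by
    intro r
    rw [NumberField.RingOfIntegers.coe_eq_algebraMap, v₀.valuation_of_algebraMap]
    rfl
  -- conjugates have valuation one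
  have hvalc : ∀ v ∈ S, v₀.valuation ↥k (c ((x v : ↥k))) = 1 := by
    intro v hv
    have hvT := hST v hv
    have hwT : primeMap c v ∈ T := hTmem v hvT
    have hwne : primeMap c v ≠ v₀ := by
      intro h
      have h2 : primeMap c v₀ = v := by rw [← h, hpm2]
      have h3 := (hSrep v₀ hv₀T).mp hv₀S
      rw [h2] at h3
      exact h3 hv
    rw [hxc v hvT, hvalcoe]
    exact aux_val_eq_one v₀ (primeMap c v) hwne _ _ (hxgen _ hwT)
  -- valuation of the other x v is one
  have hvalx : ∀ v ∈ S, v ≠ v₀ → v₀.valuation ↥k ((x v : ↥k)) = 1 := by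
    intro v hv hne
    rw [hvalcoe]
    exact aux_val_eq_one v₀ v hne _ _ (hxgen v (hST v hv))
  -- valuation of ξ
  have hVξ : v₀.valuation ↥k ξ = u ^ (-(a v₀)) := by
    rw [hξdef, map_prod]
    rw [Finset.prod_eq_single_of_mem v₀ hv₀S]
    · rw [map_zpow₀, map_mul, map_inv₀, hvalc v₀ hv₀S, hvalcoe, one_mul, ← hu, zpow_neg, inv_zpow]
    · intro v hv hne
      rw [map_zpow₀, map_mul, map_inv₀, hvalc v hv, hvalx v hv hne, one_mul, inv_one,
        one_zpow]
  -- conclude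
  have hVeq : (u ^ (-(a v₀))) ^ (ρ.den : ℕ) = 1 := by
    rw [← hVξ, ← map_pow, hξpow, map_one]
  rw [← zpow_natCast (u ^ (-(a v₀))), ← zpow_mul] at hVeq
  obtain ⟨w, hw⟩ := WithZero.ne_zero_iff_exists.mp hu0
  rw [← hw, ← WithZero.coe_zpow, ← WithZero.coe_one, WithZero.coe_inj] at hVeq
  have hm : (-(a v₀) * (ρ.den : ℤ)) ≠ 0 :=
    mul_ne_zero (neg_ne_zero.mpr ha₀) (Int.natCast_ne_zero.mpr ρ.den_nz)
  have h0 : (-(a v₀) * (ρ.den : ℤ)) • Multiplicative.toAdd w = 0 := by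
    rw [← toAdd_zpow, hVeq, toAdd_one]
  rcases smul_eq_zero.mp h0 with h | h
  · exact hm h
  · have hw1 : w = 1 := by
      have h4 : Multiplicative.ofAdd (Multiplicative.toAdd w) = Multiplicative.ofAdd 0 :=
        congrArg _ h
      simpa using h4
    rw [hw1, WithZero.coe_one] at hw
    rw [← hw] at hu1
    exact lt_irrefl _ hu1

end
end

section
/- Let k be a CM field with complex conjugation c and p a rational prime. Assume that exactly two primes of k divide p, namely 𝔭 and c(𝔭) with c(𝔭) ≠ 𝔭. Let x ∈ O_k be a nonzero element whose principal ideal satisfies (x) = 𝔭^a for some integer a ≥ 1. Then c(x)·x^{-1} is not a root of unity. -/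
open NumberField IsDedekindDomain IntermediateField

noncomputable section

/-- (Trivial example.) If exactly two primes `𝔭 ≠ c(𝔭)` of the CM field `k`
divide `p` and `(x) = 𝔭^a` with `a ≥ 1`, then `c(x)·x⁻¹` is not a root of unity. -/
theorem statement12 (k : Type*) [Field k] [NumberField k] (hk : _root_.IsCMField k)
    (c : k ≃ₐ[ℚ] k) (hc : ∀ (φ : k →+* ℂ) (y : k), φ (c y) = (starRingEnd ℂ) (φ y))
    (p : ℕ) (hp : p.Prime)
    (v0 : HeightOneSpectrum (𝓞 k)) (hv0p : (p : 𝓞 k) ∈ v0.asIdeal)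
    (hv0c : primeMap c v0 ≠ v0)
    (htwo : ∀ v : HeightOneSpectrum (𝓞 k), (p : 𝓞 k) ∈ v.asIdeal → v = v0 ∨ v = primeMap c v0)
    (x : 𝓞 k) (hx0 : x ≠ 0) (a : ℕ) (ha : 1 ≤ a)
    (hxgen : Ideal.span {x} = v0.asIdeal ^ a) :
    ¬ ∃ n : ℕ, 0 < n ∧ (c ((x : k)) * (x : k)⁻¹) ^ n = 1 := by
  rintro ⟨n, hn, hpow⟩
  set e := RingOfIntegers.mapRingEquiv c.toRingEquiv with he
  set y : 𝓞 k := e x with hy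
  have hxk : (x : k) ≠ 0 := by
    simpa using (RingOfIntegers.coe_ne_zero_iff.mpr hx0)
  -- from the root of unity equation, (c x)^n = x^n in k
  have hpow' : (c ((x : k))) ^ n = ((x : k)) ^ n := by
    have := hpow
    rw [mul_pow, inv_pow] at this
    field_simp at this
    linear_combination this
  -- hence y^n = x^n in 𝓞 k
  have hyx : y ^ n = x ^ n := by
    apply RingOfIntegers.coe_injective
    push_cast
    exact hpow'
  -- span{y} = map e (span{x})
  have hspan : Ideal.span {y} = Ideal.map e.toRingHom (Ideal.span {x}) := by
    rw [Ideal.map_span, Set.image_singleton]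
    rfl
  -- (primeMap c v0).asIdeal = map e v0.asIdeal
  have hprime : (primeMap c v0).asIdeal = Ideal.map e.toRingHom v0.asIdeal := by
    show Ideal.comap (e.symm : 𝓞 k ≃+* 𝓞 k).toRingHom v0.asIdeal = _
    exact Ideal.comap_symm e
  -- span{y} = (primeMap c v0)^a
  have hspan2 : Ideal.span {y} = (primeMap c v0).asIdeal ^ a := by
    rw [hspan, hxgen, Ideal.map_pow, hprime]
  -- equate ideal powers
  have hideals : (primeMap c v0).asIdeal ^ (a * n) = v0.asIdeal ^ (a * n) := by
    have h1 : Ideal.span {y} ^ n = Ideal.span {x} ^ n := by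
      rw [Ideal.span_singleton_pow, Ideal.span_singleton_pow, hyx]
    rw [hspan2, hxgen, ← pow_mul, ← pow_mul] at h1
    simpa [mul_comm] using h1
  -- take radicals
  have hrad : (primeMap c v0).asIdeal = v0.asIdeal := by
    have han : a * n ≠ 0 := by positivity
    calc (primeMap c v0).asIdeal
        = ((primeMap c v0).asIdeal ^ (a * n)).radical := by
          rw [Ideal.radical_pow _ han, (primeMap c v0).isPrime.radical]
      _ = (v0.asIdeal ^ (a * n)).radical := by rw [hideals]
      _ = v0.asIdeal := by rw [Ideal.radical_pow _ han, v0.isPrime.radical]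
  exact hv0c (HeightOneSpectrum.ext hrad)

end
end

section
/- Let k be a CM field with complex conjugation c, p a rational prime, and T the set of primes 𝔭 of k above p with c(𝔭) ≠ 𝔭. Assume Aut(k) contains a subgroup H with c ∉ H such that G = ⟨H, c⟩ permutes the primes in T transitively. Fix 𝔭_0 ∈ T, let k' be the fixed field of G and 𝔭'_0 = 𝔭_0 ∩ k'. Then T is exactly the set of primes of k lying above 𝔭'_0. -/
open NumberField IsDedekindDomain IntermediateField

noncomputable section

section S14Aux

variable {k : Type*} [Field k] [NumberField k]

lemma s14_coe_mapRE (σ : k ≃ₐ[ℚ] k) (y : 𝓞 k) :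
    ((RingOfIntegers.mapRingEquiv σ.toRingEquiv y : 𝓞 k) : k) = σ (y : k) := rfl

lemma s14_coe_mapRE_symm (σ : k ≃ₐ[ℚ] k) (y : 𝓞 k) :
    (((RingOfIntegers.mapRingEquiv σ.toRingEquiv).symm y : 𝓞 k) : k) = σ.symm (y : k) := rfl

lemma s14_mem_primeMap (σ : k ≃ₐ[ℚ] k) (v : HeightOneSpectrum (𝓞 k)) (y : 𝓞 k) :
    y ∈ (primeMap σ v).asIdeal ↔
      (RingOfIntegers.mapRingEquiv σ.toRingEquiv).symm y ∈ v.asIdeal := Iff.rfl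

lemma s14_mapRE_symm_mul (σ τ : k ≃ₐ[ℚ] k) (y : 𝓞 k) :
    (RingOfIntegers.mapRingEquiv (σ * τ).toRingEquiv).symm y
      = (RingOfIntegers.mapRingEquiv τ.toRingEquiv).symm
          ((RingOfIntegers.mapRingEquiv σ.toRingEquiv).symm y) := by
  apply RingOfIntegers.ext
  rw [s14_coe_mapRE_symm, s14_coe_mapRE_symm, s14_coe_mapRE_symm]
  rw [AlgEquiv.symm_apply_eq]
  simp [AlgEquiv.mul_apply]

lemma s14_primeMap_mul (σ τ : k ≃ₐ[ℚ] k) (v : HeightOneSpectrum (𝓞 k)) :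
    primeMap (σ * τ) v = primeMap σ (primeMap τ v) := by
  apply IsDedekindDomain.HeightOneSpectrum.ext
  ext y
  rw [s14_mem_primeMap, s14_mem_primeMap, s14_mem_primeMap, s14_mapRE_symm_mul]

lemma s14_primeMap_one (v : HeightOneSpectrum (𝓞 k)) :
    primeMap (1 : k ≃ₐ[ℚ] k) v = v := by
  apply IsDedekindDomain.HeightOneSpectrum.ext
  ext y
  rw [s14_mem_primeMap]
  have : (RingOfIntegers.mapRingEquiv (1 : k ≃ₐ[ℚ] k).toRingEquiv).symm y = y := by
    apply RingOfIntegers.ext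
    rw [s14_coe_mapRE_symm, AlgEquiv.symm_apply_eq]
    rfl
  rw [this]

lemma s14_central (c : k ≃ₐ[ℚ] k)
    (hc : ∀ (φ : k →+* ℂ) (y : k), φ (c y) = (starRingEnd ℂ) (φ y))
    (σ : k ≃ₐ[ℚ] k) : c * σ = σ * c := by
  let φ : k →ₐ[ℚ] ℂ := IsAlgClosed.lift
  ext x
  have h1 := hc φ.toRingHom (σ x)
  have h2 := hc (φ.toRingHom.comp (σ : k →+* k)) x
  simp only [RingHom.coe_comp, Function.comp_apply] at h1 h2
  have key : φ.toRingHom ((c * σ) x) = φ.toRingHom ((σ * c) x) := by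
    simp only [AlgEquiv.mul_apply]
    rw [h1]
    exact h2.symm
  exact φ.toRingHom.injective key

lemma s14_fixed_apply {G : Subgroup (k ≃ₐ[ℚ] k)} {x : k}
    (hx : x ∈ IntermediateField.fixedField G) {σ : k ≃ₐ[ℚ] k} (hσ : σ ∈ G) :
    σ x = x := hx ⟨σ, hσ⟩

lemma s14_mem_fixedField {G : Subgroup (k ≃ₐ[ℚ] k)} {x : k}
    (hx : ∀ σ ∈ G, σ x = x) : x ∈ IntermediateField.fixedField G :=
  fun g => hx g g.2

end S14Aux

/-- With `G = ⟨H, c⟩` permuting `T` transitively, `k'` the fixed field of `G`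
and `𝔭'_0 = 𝔭_0 ∩ k'` for a fixed `𝔭_0 ∈ T`, the set `T` is exactly the set of primes of `k`
lying above `𝔭'_0` (i.e. having the same intersection with `k'` as `𝔭_0`). -/
theorem statement14 (k : Type*) [Field k] [NumberField k] (hk : _root_.IsCMField k)
    (c : k ≃ₐ[ℚ] k) (hc : ∀ (φ : k →+* ℂ) (y : k), φ (c y) = (starRingEnd ℂ) (φ y))
    (p : ℕ) (hp : p.Prime)
    (H : Subgroup (k ≃ₐ[ℚ] k)) (hcH : c ∉ H)
    (htrans : ∀ v w : HeightOneSpectrum (𝓞 k),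
        ((p : 𝓞 k) ∈ v.asIdeal ∧ primeMap c v ≠ v) →
        ((p : 𝓞 k) ∈ w.asIdeal ∧ primeMap c w ≠ w) →
        ∃ σ ∈ H ⊔ Subgroup.closure {c}, primeMap σ v = w)
    (v0 : HeightOneSpectrum (𝓞 k))
    (hv0 : (p : 𝓞 k) ∈ v0.asIdeal ∧ primeMap c v0 ≠ v0) :
    ∀ v : HeightOneSpectrum (𝓞 k),
      (((p : 𝓞 k) ∈ v.asIdeal ∧ primeMap c v ≠ v) ↔
        (∀ y : 𝓞 k, (y : k) ∈ IntermediateField.fixedField (H ⊔ Subgroup.closure {c}) →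
          (y ∈ v.asIdeal ↔ y ∈ v0.asIdeal))) := by
  set G := H ⊔ Subgroup.closure {c} with hG
  intro v
  constructor
  · -- forward
    intro hv y hy
    obtain ⟨σ, hσG, hσ⟩ := htrans v0 v hv0 hv
    rw [← hσ, s14_mem_primeMap]
    have hfix : (RingOfIntegers.mapRingEquiv σ.toRingEquiv).symm y = y := by
      apply RingOfIntegers.ext
      rw [s14_coe_mapRE_symm, AlgEquiv.symm_apply_eq]
      exact (s14_fixed_apply hy hσG).symm
    rw [hfix]
  · -- backward
    intro hy
    have hpk : (((p : 𝓞 k) : k)) ∈ IntermediateField.fixedField G := by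
      have h1 : ((p : 𝓞 k) : k) = (p : k) := map_natCast (algebraMap (𝓞 k) k) p
      rw [h1]
      exact_mod_cast IntermediateField.natCast_mem _ p
    have hpv : (p : 𝓞 k) ∈ v.asIdeal := (hy _ hpk).mpr hv0.1
    refine ⟨hpv, ?_⟩
    -- obtain σ ∈ G with primeMap σ v = v0
    haveI : Fintype (k ≃ₐ[ℚ] k) := AlgEquiv.fintype ℚ k
    haveI : Fintype ↥G := Fintype.ofFinite _
    obtain ⟨σ, hσG, hσv⟩ : ∃ σ ∈ G, primeMap σ v = v0 := by
      by_contra hno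
      push_neg at hno
      have hnotle : ¬ ∃ i ∈ (Finset.univ : Finset ↥G),
          v0.asIdeal ≤ (primeMap (↑i : k ≃ₐ[ℚ] k) v).asIdeal := by
        rintro ⟨i, -, hle⟩
        exact hno ↑i i.2 (IsDedekindDomain.HeightOneSpectrum.ext
          (v0.isMaximal.eq_of_le (primeMap (↑i : k ≃ₐ[ℚ] k) v).isPrime.ne_top hle).symm)
      have hnsub := (Ideal.subset_union_prime (s := (Finset.univ : Finset ↥G))
        (f := fun i : ↥G => (primeMap (↑i : k ≃ₐ[ℚ] k) v).asIdeal)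
        ⟨1, one_mem G⟩ ⟨1, one_mem G⟩
        (fun i _ _ _ => (primeMap (↑i : k ≃ₐ[ℚ] k) v).isPrime)).not.mpr hnotle
      obtain ⟨x, hxv0, hx⟩ := Set.not_subset.mp hnsub
      have hxnot : ∀ i : ↥G, x ∉ (primeMap (↑i : k ≃ₐ[ℚ] k) v).asIdeal := by
        intro i hi
        exact hx (Set.mem_biUnion (by simp) hi)
      set N : 𝓞 k := ∏ i : ↥G,
        RingOfIntegers.mapRingEquiv (↑i : k ≃ₐ[ℚ] k).toRingEquiv x with hN
      have hNv0 : N ∈ v0.asIdeal := by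
        have h1 : RingOfIntegers.mapRingEquiv ((1 : ↥G) : k ≃ₐ[ℚ] k).toRingEquiv x = x := by
          apply RingOfIntegers.ext
          rw [s14_coe_mapRE]
          simp
        have hdvd : x ∣ N := h1 ▸ Finset.dvd_prod_of_mem _ (Finset.mem_univ (1 : ↥G))
        obtain ⟨t, ht⟩ := hdvd
        rw [ht]
        exact Ideal.mul_mem_right _ _ hxv0
      have hNfix : (N : k) ∈ IntermediateField.fixedField G := by
        apply s14_mem_fixedField
        intro g hg
        have hcoe : (N : k) = ∏ i : ↥G, (↑i : k ≃ₐ[ℚ] k) (x : k) := by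
          rw [hN, RingOfIntegers.coe_eq_algebraMap, map_prod]
          exact Finset.prod_congr rfl (fun i _ => s14_coe_mapRE _ _)
        rw [hcoe, map_prod]
        have step : ∀ i : ↥G, g ((↑i : k ≃ₐ[ℚ] k) (x : k))
            = (↑((⟨g, hg⟩ : ↥G) * i) : k ≃ₐ[ℚ] k) (x : k) := fun i => rfl
        rw [Finset.prod_congr rfl (fun i _ => step i)]
        exact Equiv.prod_comp (Equiv.mulLeft (⟨g, hg⟩ : ↥G))
          (fun i : ↥G => (↑i : k ≃ₐ[ℚ] k) (x : k))
      have hNv : N ∈ v.asIdeal := (hy N hNfix).mpr hNv0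
      obtain ⟨i, -, hix⟩ := (Ideal.IsPrime.prod_mem_iff (hp := v.isPrime)).mp hNv
      apply hxnot i⁻¹
      rw [s14_mem_primeMap]
      have heq : (RingOfIntegers.mapRingEquiv ((↑(i⁻¹) : k ≃ₐ[ℚ] k)).toRingEquiv).symm x
          = RingOfIntegers.mapRingEquiv (↑i : k ≃ₐ[ℚ] k).toRingEquiv x := by
        apply RingOfIntegers.ext
        rw [s14_coe_mapRE_symm, s14_coe_mapRE]
        have : (↑(i⁻¹) : k ≃ₐ[ℚ] k) = (↑i : k ≃ₐ[ℚ] k)⁻¹ := rfl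
        rw [this]
        show ((↑i : k ≃ₐ[ℚ] k).symm).symm (x : k) = (↑i : k ≃ₐ[ℚ] k) (x : k)
        rw [AlgEquiv.symm_symm]
      rw [heq]
      exact hix
    -- conclude primeMap c v ≠ v
    intro hcveq
    apply hv0.2
    have hcs := s14_central c hc σ
    calc primeMap c v0 = primeMap c (primeMap σ v) := by rw [hσv]
      _ = primeMap (c * σ) v := (s14_primeMap_mul c σ v).symm
      _ = primeMap (σ * c) v := by rw [hcs]
      _ = primeMap σ (primeMap c v) := s14_primeMap_mul σ c v
      _ = primeMap σ v := by rw [hcveq]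
      _ = v0 := hσv


end
end

section
/- Let k ⊂ ℂ be a CM field, p a rational prime, H a subgroup of Aut(k) not containing complex conjugation c, and ξ ∈ E_p(k) such that the set of conjugates {σ(ξ) : σ ∈ H} is a ℚ-basis of E_p(k) ⊗_ℤ ℚ. Let H_ξ = {σ ∈ H : σ(ξ) = ξ} and H̄ = H/H_ξ. Fix an integer N ≥ 1 and for each σ̄ ∈ H̄ choose a complex number ℓ_{σ̄} with exp(ℓ_{σ̄}) = σ̄(ξ)^N. Then the family (ℓ_{σ̄})_{σ̄ ∈ H̄} is linearly independent over ℚ. -/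
open NumberField IsDedekindDomain IntermediateField

noncomputable section

/-- A finite subset `Ξ` of `k` is a `ℚ`-basis of `E_p(k) ⊗ ℚ`: its elements lie in `E_p(k)`,
are multiplicatively independent, and together with the roots of unity `μ(k)` generate a
finite-index subgroup of `E_p(k)`. -/
def IsQBasisEpSet (k : Type*) [Field k] [NumberField k] (p : ℕ) (Ξ : Finset k) : Prop :=
  (∀ x ∈ Ξ, IsEp k p x) ∧
  (∀ a : k → ℤ, (∏ x ∈ Ξ, x ^ a x) = 1 → ∀ x ∈ Ξ, a x = 0) ∧
  (∀ y : k, IsEp k p y → ∃ n : ℕ, 0 < n ∧ ∃ (a : k → ℤ) (ζ : k),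
      (∃ l : ℕ, 0 < l ∧ ζ ^ l = 1) ∧ y ^ n = ζ * ∏ x ∈ Ξ, x ^ a x)


set_option synthInstance.maxHeartbeats 1000000 in
/-- For `H ≤ Aut k` with `c ∉ H`, `ξ ∈ E_p(k)` whose `H`-conjugates form a
`ℚ`-basis of `E_p(k) ⊗ ℚ`, `H̄ = H/H_ξ` (realized as `Q` with surjection `π` of kernel the
stabilizer of `ξ`), `N ≥ 1`, and any logarithms `ℓ_σ̄` with `exp ℓ_σ̄ = σ̄(ξ)^N`, the family
`(ℓ_σ̄)_{σ̄ ∈ H̄}` is `ℚ`-linearly independent. -/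
theorem statement16 (k : Subfield ℂ) [NumberField ↥k] (hk : _root_.IsCMField ↥k)
    (p : ℕ) (hp : p.Prime)
    (c : ↥k ≃ₐ[ℚ] ↥k) (hc : ∀ (φ : ↥k →+* ℂ) (y : ↥k), φ (c y) = (starRingEnd ℂ) (φ y))
    (H : Subgroup (↥k ≃ₐ[ℚ] ↥k)) (hcH : c ∉ H)
    (ξ : ↥k) (hξ : IsEp ↥k p ξ)
    (hbasis : ∃ Ξ : Finset ↥k,
        (Ξ : Set ↥k) = (fun σ : ↥k ≃ₐ[ℚ] ↥k => σ ξ) '' (H : Set (↥k ≃ₐ[ℚ] ↥k)) ∧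
        IsQBasisEpSet ↥k p Ξ)
    (Q : Type*) [Group Q] (π : ↥H →* Q) (hπ : Function.Surjective π)
    (hker : ∀ σ : ↥H, π σ = 1 ↔ (σ : ↥k ≃ₐ[ℚ] ↥k) ξ = ξ)
    (act : Q → ↥k) (hact : ∀ σ : ↥H, act (π σ) = (σ : ↥k ≃ₐ[ℚ] ↥k) ξ)
    (N : ℕ) (hN : 0 < N)
    (ℓ : Q → ℂ) (hℓ : ∀ ρ : Q, Complex.exp (ℓ ρ) = ((act ρ : ℂ)) ^ N) :
    LinearIndependent ℚ ℓ := by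
  classical
  obtain ⟨Ξ, hΞset, hEp, hind, -⟩ := hbasis
  -- `act` is injective
  have hactinj : Function.Injective act := by
    intro ρ ρ' h
    obtain ⟨σ, rfl⟩ := hπ ρ
    obtain ⟨σ', rfl⟩ := hπ ρ'
    rw [hact, hact] at h
    have h1 : π (σ'⁻¹ * σ) = 1 := by
      rw [hker]
      have : ((σ'⁻¹ * σ : ↥H) : ↥k ≃ₐ[ℚ] ↥k) ξ
          = ((σ' : ↥k ≃ₐ[ℚ] ↥k)⁻¹) ((σ : ↥k ≃ₐ[ℚ] ↥k) ξ) := rfl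
      rw [this, h]
      show ((σ' : ↥k ≃ₐ[ℚ] ↥k)⁻¹ * (σ' : ↥k ≃ₐ[ℚ] ↥k)) ξ = ξ
      rw [inv_mul_cancel]; rfl
    rw [map_mul, map_inv] at h1
    exact (inv_mul_eq_one.mp h1).symm
  -- every `act ρ` lies in `Ξ`
  have hmemΞ : ∀ ρ : Q, act ρ ∈ Ξ := by
    intro ρ
    obtain ⟨σ, rfl⟩ := hπ ρ
    rw [hact]
    have : (σ : ↥k ≃ₐ[ℚ] ↥k) ξ ∈ (Ξ : Set ↥k) := by
      rw [hΞset]; exact ⟨σ, σ.2, rfl⟩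
    exact_mod_cast this
  rw [linearIndependent_iff']
  intro s g hsum ρ₀ hρ₀
  -- clear denominators
  set d : ℕ := ∏ ρ ∈ s, (g ρ).den with hd
  have hdpos : 0 < d := Finset.prod_pos fun ρ _ => (g ρ).pos
  set n : Q → ℤ := fun ρ => (g ρ).num * ((d / (g ρ).den : ℕ) : ℤ) with hn
  have hnq : ∀ ρ ∈ s, (n ρ : ℚ) = g ρ * d := by
    intro ρ hρ
    have hdvd : (g ρ).den ∣ d := Finset.dvd_prod_of_mem _ hρ
    have h1 : ((g ρ).num : ℚ) = g ρ * (g ρ).den := (Rat.mul_den_eq_num (g ρ)).symm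
    have h2 : ((g ρ).den : ℚ) * ((d / (g ρ).den : ℕ) : ℚ) = (d : ℚ) := by
      exact_mod_cast congrArg (Nat.cast : ℕ → ℚ) (Nat.mul_div_cancel' hdvd)
    show (((g ρ).num * ((d / (g ρ).den : ℕ) : ℤ) : ℤ) : ℚ) = g ρ * d
    rw [Int.cast_mul, Int.cast_natCast, h1, mul_assoc, h2]
  -- exponentiate the relation
  have hsum2 : ∑ ρ ∈ s, (n ρ : ℂ) * ℓ ρ = 0 := by
    have : ∑ ρ ∈ s, (n ρ : ℂ) * ℓ ρ = (d : ℂ) * ∑ ρ ∈ s, g ρ • ℓ ρ := by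
      rw [Finset.mul_sum]
      refine Finset.sum_congr rfl fun ρ hρ => ?_
      have h2 : ((n ρ : ℚ) : ℂ) = ((g ρ * d : ℚ) : ℂ) := by exact_mod_cast hnq ρ hρ
      push_cast at h2
      rw [h2, Rat.smul_def]
      ring
    rw [this, hsum, mul_zero]
  have hexp : (1 : ℂ) = ∏ ρ ∈ s, ((act ρ : ℂ)) ^ ((N : ℤ) * n ρ) := by
    calc (1 : ℂ) = Complex.exp (∑ ρ ∈ s, (n ρ : ℂ) * ℓ ρ) := by
          rw [hsum2, Complex.exp_zero]
      _ = ∏ ρ ∈ s, Complex.exp ((n ρ : ℂ) * ℓ ρ) := Complex.exp_sum s _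
      _ = ∏ ρ ∈ s, ((act ρ : ℂ)) ^ ((N : ℤ) * n ρ) := by
          refine Finset.prod_congr rfl fun ρ _ => ?_
          rw [Complex.exp_int_mul, hℓ, ← zpow_natCast, ← zpow_mul]
  -- transfer to `k`
  have hk1 : ∏ ρ ∈ s, act ρ ^ ((N : ℤ) * n ρ) = (1 : ↥k) := by
    have hc2 : ((∏ ρ ∈ s, act ρ ^ ((N : ℤ) * n ρ) : ↥k) : ℂ)
        = ∏ ρ ∈ s, ((act ρ : ℂ)) ^ ((N : ℤ) * n ρ) := by
      push_cast
      rfl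
    refine Subtype.coe_injective ?_
    show ((∏ ρ ∈ s, act ρ ^ ((N : ℤ) * n ρ) : ↥k) : ℂ) = ((1 : ↥k) : ℂ)
    rw [hc2, ← hexp]
    simp
  -- multiplicative independence
  set a : ↥k → ℤ := fun x => ∑ ρ ∈ s.filter (fun ρ => act ρ = x), (N : ℤ) * n ρ with ha
  have haρ : ∀ ρ ∈ s, a (act ρ) = (N : ℤ) * n ρ := by
    intro ρ hρ
    simp only [ha]
    have hfil : s.filter (fun ρ' => act ρ' = act ρ) = {ρ} := by
      ext ρ'
      simp only [Finset.mem_filter, Finset.mem_singleton]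
      constructor
      · rintro ⟨-, h⟩; exact hactinj h
      · rintro rfl; exact ⟨hρ, rfl⟩
    rw [hfil, Finset.sum_singleton]
  have hprodΞ : ∏ x ∈ Ξ, x ^ a x = 1 := by
    have hsub : s.image act ⊆ Ξ := by
      intro x hx
      obtain ⟨ρ, -, rfl⟩ := Finset.mem_image.mp hx
      exact hmemΞ ρ
    have h0 : ∀ x ∈ Ξ, x ∉ s.image act → x ^ a x = 1 := by
      intro x _ hx
      have : s.filter (fun ρ => act ρ = x) = ∅ := by
        rw [Finset.filter_eq_empty_iff]
        intro ρ hρ hax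
        exact hx (Finset.mem_image.mpr ⟨ρ, hρ, hax⟩)
      simp only [ha, this, Finset.sum_empty, zpow_zero]
    calc ∏ x ∈ Ξ, x ^ a x = ∏ x ∈ s.image act, x ^ a x :=
          (Finset.prod_subset hsub fun x hx hx' => h0 x hx hx').symm
      _ = ∏ ρ ∈ s, act ρ ^ a (act ρ) :=
          Finset.prod_image fun ρ _ ρ' _ h => hactinj h
      _ = ∏ ρ ∈ s, act ρ ^ ((N : ℤ) * n ρ) :=
          Finset.prod_congr rfl fun ρ hρ => by rw [haρ ρ hρ]
      _ = 1 := hk1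
  have hz : a (act ρ₀) = 0 := hind a hprodΞ (act ρ₀) (hmemΞ ρ₀)
  rw [haρ ρ₀ hρ₀] at hz
  have hN' : (N : ℤ) ≠ 0 := by exact_mod_cast hN.ne'
  have hn0 : n ρ₀ = 0 := by
    rcases mul_eq_zero.mp hz with h | h
    · exact absurd h hN'
    · exact h
  have := hnq ρ₀ hρ₀
  rw [hn0] at this
  have hd0 : (d : ℚ) ≠ 0 := by exact_mod_cast hdpos.ne'
  have := this.symm
  rcases mul_eq_zero.mp (by exact_mod_cast this : g ρ₀ * (d : ℚ) = 0) with h | h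
  · exact h
  · exact absurd h hd0

end
end
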